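/- In the setting of the previous statement, suppose additionally that gₙ ∈ H satisfies Jₙ(gₙ) ≤ jₙ + αₙ^η with η > 1, and that P(gₙ) is bounded. Then ‖A gₙ − Φ‖ → 0 as n → ∞. -/
import Mathlib


open Filter

/-- Quasi-minimizers of the GLSM cost functional with bounded penalty term
asymptotically solve the far field equation `A g = Φ`. -/
theorem stmt_3 {H : Type*} [NormedAddCommGroup H] [InnerProductSpace ℂ H]
    (A : H →L[ℂ] H) (hA : DenseRange A) (Φ : H)
    (α : ℕ → ℝ) (hαpos : ∀ n, 0 < α n) (hα0 : Tendsto α atTop (nhds 0))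
    (P : H → ℝ) (hP : ∀ g, 0 ≤ P g) (η : ℝ) (hη : 1 < η)
    (g : ℕ → H)
    (hg : ∀ n, α n * P (g n) + ‖A (g n) - Φ‖ ^ 2 ≤
      (⨅ h : H, α n * P h + ‖A h - Φ‖ ^ 2) + α n ^ η)
    (M : ℝ) (hM : ∀ n, P (g n) ≤ M) :
    Tendsto (fun n => ‖A (g n) - Φ‖) atTop (nhds 0) := by
  have hbdd : ∀ n, BddBelow (Set.range fun h : H => α n * P h + ‖A h - Φ‖ ^ 2) := by
    intro n
    refine ⟨0, ?_⟩
    rintro x ⟨h, rfl⟩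
    exact add_nonneg (mul_nonneg (hαpos n).le (hP _)) (sq_nonneg _)
  have hαη : Tendsto (fun n => α n ^ η) atTop (nhds 0) := by
    have := hα0.rpow_const (p := η) (Or.inr (by linarith))
    simpa [Real.zero_rpow (by linarith : η ≠ 0)] using this
  rw [Metric.tendsto_atTop]
  intro ε hε
  -- choose h with ‖A h - Φ‖ small
  obtain ⟨h, hh⟩ : ∃ h : H, dist Φ (A h) < ε / 2 :=
    hA.exists_dist_lt Φ (by linarith)
  have hh' : ‖A h - Φ‖ < ε / 2 := by
    rwa [dist_comm, dist_eq_norm] at hh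
  -- αₙ * P h + αₙ^η → 0
  have htend : Tendsto (fun n => α n * P h + α n ^ η) atTop (nhds 0) := by
    have := (hα0.mul_const (P h)).add hαη
    simpa using this
  have hev : ∀ᶠ n in atTop, α n * P h + α n ^ η < ε ^ 2 * (3 / 4) - ε ^ 2 / 4 := by
    refine htend.eventually (gt_mem_nhds ?_)
    nlinarith
  obtain ⟨N, hN⟩ := hev.exists_forall_of_atTop
  refine ⟨N, fun n hn => ?_⟩
  have key : ‖A (g n) - Φ‖ ^ 2 ≤ α n * P h + ‖A h - Φ‖ ^ 2 + α n ^ η := by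
    have h1 : (⨅ k : H, α n * P k + ‖A k - Φ‖ ^ 2) ≤ α n * P h + ‖A h - Φ‖ ^ 2 :=
      ciInf_le (hbdd n) h
    have h2 := hg n
    have h3 : 0 ≤ α n * P (g n) := mul_nonneg (hαpos n).le (hP _)
    linarith
  have hlt : ‖A (g n) - Φ‖ ^ 2 < ε ^ 2 := by
    have := hN n hn
    nlinarith [hh', norm_nonneg (A h - Φ)]
  have : ‖A (g n) - Φ‖ < ε := by
    nlinarith [norm_nonneg (A (g n) - Φ)]
  simpa [Real.dist_eq, abs_of_nonneg (norm_nonneg _)] using this
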